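/- Let X be a finite nonempty set, let α ∈ (0,1) ∪ (1,∞), and let p be a probability distribution on X with ∑_x p(x)^α > 0. Then the supremum over all strictly positive probability distributions r on X of (∑_{x∈X} p(x) · r(x)^{(α−1)/α})^{α/(α−1)} equals (∑_{x∈X} p(x)^α)^{1/(α−1)}; that is, the generalized prior vulnerability with Kolmogorov–Nagumo function ln_{1/α} and the soft 0-1 score equals exp(−H_α(X)), where H_α is the Rényi entropy of order α. -/

import Mathlib

open Real BigOperators Finset

/-- The generalized prior vulnerability with KN function `ln_{1/α}` and the soft 0-1
score equals `exp(−H_α(X))`: the supremum over strictly positive distributions `r` of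
`(∑ x, p x · r x ^ ((α−1)/α)) ^ (α/(α−1))` equals `(∑ x, p x ^ α) ^ (1/(α−1))`. -/
theorem prior_vulnerability_eq_exp_neg_renyi
    {X : Type*} [Fintype X] [Nonempty X]
    (α : ℝ) (hα0 : 0 < α) (hα1 : α ≠ 1)
    (p : X → ℝ) (hp : ∀ x, 0 ≤ p x) (hp1 : (∑ x, p x) = 1)
    (hps : 0 < ∑ x, p x ^ α) :
    sSup {v : ℝ | ∃ r : X → ℝ, (∀ x, 0 < r x) ∧ (∑ x, r x) = 1 ∧
        v = (∑ x, p x * r x ^ ((α - 1) / α)) ^ (α / (α - 1))}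
      = (∑ x, p x ^ α) ^ (1 / (α - 1)) := by
  have hα1' : α - 1 ≠ 0 := sub_ne_zero.mpr hα1
  have hαne : α ≠ 0 := hα0.ne'
  set S := ∑ x, p x ^ α with hSdef
  -- some positive p
  obtain ⟨x₀, hx₀⟩ : ∃ x, 0 < p x := by
    by_contra h
    push_neg at h
    have h0 : ∀ x, p x = 0 := fun x => le_antisymm (h x) (hp x)
    simp [h0] at hp1
  -- key upper bound
  have key : ∀ r : X → ℝ, (∀ x, 0 < r x) → (∑ x, r x) = 1 →
      (∑ x, p x * r x ^ ((α - 1) / α)) ^ (α / (α - 1)) ≤ S ^ (1 / (α - 1)) := by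
    intro r hr hr1
    set T := ∑ x, p x * r x ^ ((α - 1) / α) with hT
    have hT0 : 0 ≤ T := Finset.sum_nonneg fun x _ =>
      mul_nonneg (hp x) (Real.rpow_nonneg (hr x).le _)
    rcases hα1.lt_or_gt with hlt | hgt
    · -- α < 1 : reverse direction via Hölder with exponents 1/α, 1/(1-α)
      have h1α : (0:ℝ) < 1 - α := by linarith
      have hTpos : 0 < T := by
        refine Finset.sum_pos' (fun x _ => mul_nonneg (hp x) (Real.rpow_nonneg (hr x).le _))
          ⟨x₀, Finset.mem_univ _, mul_pos hx₀ (Real.rpow_pos_of_pos (hr x₀) _)⟩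
      have hconj : Real.HolderConjugate (1/α) (1/(1-α)) := by
        rw [Real.holderConjugate_iff]
        constructor
        · rw [lt_div_iff₀ hα0]; linarith
        · field_simp
          ring
      have hold := Real.inner_le_Lp_mul_Lq_of_nonneg (f := fun x => (p x * r x ^ ((α - 1) / α)) ^ α)
        (g := fun x => r x ^ (1 - α)) (s := Finset.univ) hconj
        (fun i _ => Real.rpow_nonneg (mul_nonneg (hp i) (Real.rpow_nonneg (hr i).le _)) _)
        (fun i _ => Real.rpow_nonneg (hr i).le _)
      have e1 : ∀ x : X, (p x * r x ^ ((α - 1) / α)) ^ α * r x ^ (1 - α) = p x ^ α := by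
        intro x
        rw [Real.mul_rpow (hp x) (Real.rpow_nonneg (hr x).le _),
          ← Real.rpow_mul (hr x).le, mul_assoc, ← Real.rpow_add (hr x)]
        have h : (α - 1) / α * α + (1 - α) = 0 := by field_simp; ring
        rw [h, Real.rpow_zero, mul_one]
      have e2 : ∀ x : X, ((p x * r x ^ ((α - 1) / α)) ^ α) ^ (1/α) = p x * r x ^ ((α - 1) / α) := by
        intro x
        rw [← Real.rpow_mul (mul_nonneg (hp x) (Real.rpow_nonneg (hr x).le _)),
          mul_one_div_cancel hαne, Real.rpow_one]
      have e3 : ∀ x : X, (r x ^ (1 - α)) ^ (1/(1-α)) = r x := by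
        intro x
        rw [← Real.rpow_mul (hr x).le, mul_one_div_cancel h1α.ne', Real.rpow_one]
      simp only [e1, e2, e3] at hold
      rw [hr1] at hold
      have hST : S ≤ T ^ α := by
        have h11 : (1:ℝ) / (1/α) = α := by field_simp
        have h12 : (1:ℝ) / (1/(1-α)) = 1 - α := by field_simp
        rw [h11, h12, Real.one_rpow, mul_one] at hold
        exact hold
      have hexp : 1 / (α - 1) ≤ 0 := by
        apply div_nonpos_of_nonneg_of_nonpos zero_le_one
        linarith
      have := Real.rpow_le_rpow_of_nonpos hps hST hexp
      calc T ^ (α / (α - 1)) = (T ^ α) ^ (1 / (α - 1)) := by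
            rw [← Real.rpow_mul hT0]; ring_nf
        _ ≤ S ^ (1 / (α - 1)) := this
    · -- 1 < α : Hölder with exponents α, α/(α-1)
      have hconj : Real.HolderConjugate α (α/(α-1)) := by
        rw [Real.holderConjugate_iff]
        constructor
        · exact hgt
        · field_simp
          ring
      have hold := Real.inner_le_Lp_mul_Lq_of_nonneg (f := p)
        (g := fun x => r x ^ ((α - 1) / α)) (s := Finset.univ) hconj
        (fun i _ => hp i) (fun i _ => Real.rpow_nonneg (hr i).le _)
      have e3 : ∀ x : X, (r x ^ ((α-1)/α)) ^ (α/(α-1)) = r x := by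
        intro x
        rw [← Real.rpow_mul (hr x).le]
        have : (α-1)/α * (α/(α-1)) = 1 := by field_simp
        rw [this, Real.rpow_one]
      simp only [e3] at hold
      rw [hr1] at hold
      have hTle : T ≤ S ^ (1/α) := by
        rw [Real.one_rpow, mul_one] at hold
        exact hold
      have hee : 0 ≤ α / (α - 1) := by
        apply div_nonneg hα0.le; linarith
      calc T ^ (α / (α - 1)) ≤ (S ^ (1/α)) ^ (α/(α-1)) :=
            Real.rpow_le_rpow hT0 hTle hee
        _ = S ^ (1 / (α - 1)) := by
            rw [← Real.rpow_mul hps.le]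
            congr 1
            field_simp
  -- the set is nonempty
  have hne : {v : ℝ | ∃ r : X → ℝ, (∀ x, 0 < r x) ∧ (∑ x, r x) = 1 ∧
        v = (∑ x, p x * r x ^ ((α - 1) / α)) ^ (α / (α - 1))}.Nonempty := by
    have hn : (0:ℝ) < Fintype.card X := by
      exact_mod_cast Fintype.card_pos
    refine ⟨_, fun _ => 1 / Fintype.card X, fun x => by positivity, ?_, rfl⟩
    rw [Finset.sum_const, Finset.card_univ, nsmul_eq_mul]
    field_simp
  have hbdd : BddAbove {v : ℝ | ∃ r : X → ℝ, (∀ x, 0 < r x) ∧ (∑ x, r x) = 1 ∧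
        v = (∑ x, p x * r x ^ ((α - 1) / α)) ^ (α / (α - 1))} := by
    refine ⟨S ^ (1 / (α - 1)), fun v hv => ?_⟩
    obtain ⟨r, hr, hr1, rfl⟩ := hv
    exact key r hr hr1
  apply le_antisymm
  · exact csSup_le hne (fun v hv => by
      obtain ⟨r, hr, hr1, rfl⟩ := hv; exact key r hr hr1)
  · rw [le_csSup_iff hbdd hne]
    intro b hb
    -- approximation family
    set n : ℕ := Fintype.card X with hn
    have hnpos : (0:ℝ) < n := by exact_mod_cast Fintype.card_pos
    set q : X → ℝ := fun x => p x ^ α / S with hq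
    have hq0 : ∀ x, 0 ≤ q x := fun x =>
      div_nonneg (Real.rpow_nonneg (hp x) _) hps.le
    have hqsum : ∑ x, q x = 1 := by
      rw [hq]
      rw [← Finset.sum_div, div_self hps.ne']
    set r : ℝ → X → ℝ := fun δ x => (1 - δ) * q x + δ / n with hrdef
    set f : ℝ → ℝ := fun δ => (∑ x, p x * (r δ x) ^ ((α - 1) / α)) ^ (α / (α - 1)) with hf
    -- membership for δ ∈ (0,1)
    have hmem : ∀ δ ∈ Set.Ioo (0:ℝ) 1, f δ ∈ {v : ℝ | ∃ r : X → ℝ, (∀ x, 0 < r x) ∧ (∑ x, r x) = 1 ∧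
        v = (∑ x, p x * r x ^ ((α - 1) / α)) ^ (α / (α - 1))} := by
      intro δ hδ
      refine ⟨r δ, fun x => ?_, ?_, rfl⟩
      · have h1 : 0 ≤ (1 - δ) * q x := mul_nonneg (by linarith [hδ.2]) (hq0 x)
        have h2 : 0 < δ / n := div_pos hδ.1 hnpos
        simp only [hrdef]
        linarith
      · simp only [hrdef]
        rw [Finset.sum_add_distrib, ← Finset.mul_sum, hqsum, Finset.sum_const,
          Finset.card_univ, nsmul_eq_mul]
        field_simp
        rw [← hn]; ring
    -- value at 0
    have hr0 : ∀ x, r 0 x = q x := by intro x; simp [hrdef]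
    have hT0val : (∑ x, p x * (r 0 x) ^ ((α - 1) / α)) = S ^ (1/α) := by
      have e : ∀ x : X, p x * (q x) ^ ((α - 1) / α) = p x ^ α * S ^ (-((α-1)/α)) := by
        intro x
        rcases eq_or_lt_of_le (hp x) with h0 | h0
        · rw [← h0, Real.zero_rpow hαne, zero_mul, zero_mul]
        · rw [hq]
          simp only []
          rw [Real.div_rpow (Real.rpow_nonneg (hp x) _) hps.le,
            ← Real.rpow_mul (hp x), Real.rpow_neg hps.le, div_eq_mul_inv, ← mul_assoc]
          congr 1
          nth_rewrite 1 [← Real.rpow_one (p x)]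
          rw [← Real.rpow_add h0]
          congr 1
          field_simp
          ring
      simp only [hr0, e]
      rw [← Finset.sum_mul, ← hSdef]
      nth_rewrite 1 [← Real.rpow_one S]
      rw [← Real.rpow_add hps]
      congr 1
      field_simp
      ring
    have hf0 : f 0 = S ^ (1 / (α - 1)) := by
      rw [hf]
      simp only []
      rw [hT0val, ← Real.rpow_mul hps.le]
      congr 1
      field_simp
    -- continuity at 0
    have hcont : ContinuousAt f 0 := by
      have hTc : ContinuousAt (fun δ => ∑ x, p x * (r δ x) ^ ((α - 1) / α)) 0 := by
        apply tendsto_finset_sum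
        intro x _
        rcases eq_or_lt_of_le (hp x) with h0 | h0
        · have heq : (fun δ => p x * (r δ x) ^ ((α - 1) / α)) = fun _ => 0 := by
            funext δ; rw [← h0, zero_mul]
          show ContinuousAt (fun δ => p x * (r δ x) ^ ((α - 1) / α)) 0
          rw [heq]; exact continuousAt_const
        · have hb0 : ContinuousAt (fun δ : ℝ => r δ x) 0 := by
            show ContinuousAt (fun δ : ℝ => (1 - δ) * q x + δ / n) 0
            exact ((continuousAt_const.sub continuousAt_id).mul continuousAt_const).add
              (continuousAt_id.div_const _)
          have hval : r 0 x ≠ 0 := by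
            rw [hr0]
            exact (div_pos (Real.rpow_pos_of_pos h0 _) hps).ne'
          exact continuousAt_const.mul (hb0.rpow_const (Or.inl hval))
      apply ContinuousAt.rpow_const hTc
      left
      show (∑ x, p x * (r 0 x) ^ ((α - 1) / α)) ≠ 0
      rw [hT0val]
      exact (Real.rpow_pos_of_pos hps _).ne'
    -- conclude
    have htend : Filter.Tendsto f (nhdsWithin 0 (Set.Ioi 0)) (nhds (S ^ (1 / (α - 1)))) := by
      rw [← hf0]
      exact hcont.continuousWithinAt.tendsto
    refine le_of_tendsto htend ?_
    filter_upwards [Ioo_mem_nhdsGT_of_mem (Set.mem_Ico.mpr ⟨le_refl 0, one_pos⟩)] with δ hδ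
    exact hb (hmem δ hδ)
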